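/- Let a, b be nonnegative reals with a + b = 1 and let ψ be the GHZ-class state ψ = √a·|000⟩ + √b·|111⟩. Then the concurrence of assistance of the reduced state of the first two qubits saturates the upper bound 2√(det ρ_A): Tr R(ρ_AB) = 2√(a·b) = 2√(det ρ_A). -/

import Mathlib

open Matrix Complex Kronecker Finset
open scoped ComplexOrder

noncomputable section

abbrev TwoQubitMat := Matrix (Fin 2 × Fin 2) (Fin 2 × Fin 2) ℂ

def sigmaY : Matrix (Fin 2) (Fin 2) ℂ := !![0, -Complex.I; Complex.I, 0]

def spinFlip (ρ : TwoQubitMat) : TwoQubitMat :=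
  (sigmaY ⊗ₖ sigmaY) * ρ.map (starRingEnd ℂ) * (sigmaY ⊗ₖ sigmaY)

def matSqrt {m : Type*} [Fintype m] [DecidableEq m] (M : Matrix m m ℂ) : Matrix m m ℂ :=
  open scoped Classical in
  if h : M.PosSemidef then h.1.eigenvectorUnitary.1 * diagonal ((↑) ∘ (√·) ∘ h.1.eigenvalues) *
    (star h.1.eigenvectorUnitary : Matrix m m ℂ) else 0

def Rmat (ρ : TwoQubitMat) : TwoQubitMat :=
  matSqrt (matSqrt ρ * spinFlip ρ * matSqrt ρ)

def CoA (ρ : TwoQubitMat) : ℝ := (Rmat ρ).trace.re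

def lmin2 (M : Matrix (Fin 2) (Fin 2) ℂ) : ℝ :=
  if h : M.IsHermitian then min (h.eigenvalues 0) (h.eigenvalues 1) else 0

def maxEig4 (M : TwoQubitMat) : ℝ :=
  if h : M.IsHermitian then Finset.univ.sup' Finset.univ_nonempty h.eigenvalues else 0

def Conc (ρ : TwoQubitMat) : ℝ := max 0 (2 * maxEig4 (Rmat ρ) - (Rmat ρ).trace.re)

def eigMultiset (M : TwoQubitMat) : Multiset ℝ :=
  if h : M.IsHermitian then Finset.univ.val.map h.eigenvalues else 0

def rhoAB (ψ : Fin 2 → Fin 2 → Fin 2 → ℂ) : TwoQubitMat :=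
  fun p q => ∑ l, ψ p.1 p.2 l * (starRingEnd ℂ) (ψ q.1 q.2 l)

def rhoAS (ψ : Fin 2 → Fin 2 → Fin 2 → ℂ) : TwoQubitMat :=
  fun p q => ∑ j, ψ p.1 j p.2 * (starRingEnd ℂ) (ψ q.1 j q.2)

def rhoA (ψ : Fin 2 → Fin 2 → Fin 2 → ℂ) : Matrix (Fin 2) (Fin 2) ℂ :=
  fun i i' => ∑ j, ∑ l, ψ i j l * (starRingEnd ℂ) (ψ i' j l)

/-- The GHZ-class state `√a|000⟩ + √b|111⟩`. -/
def psiGHZ (a b : ℝ) : Fin 2 → Fin 2 → Fin 2 → ℂ := fun i j l =>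
  if i = 0 ∧ j = 0 ∧ l = 0 then (Real.sqrt a : ℂ)
  else if i = 1 ∧ j = 1 ∧ l = 1 then (Real.sqrt b : ℂ)
  else 0

lemma matSqrt_diagonal {m : Type*} [Fintype m] [DecidableEq m] (f : m → ℝ) (hf : ∀ i, 0 ≤ f i) :
    matSqrt (Matrix.diagonal (fun i => (f i : ℂ))) =
      Matrix.diagonal (fun i => ((Real.sqrt (f i) : ℝ) : ℂ)) := by
  have hP : (Matrix.diagonal (fun i => (f i : ℂ))).PosSemidef := by
    refine posSemidef_diagonal_iff.mpr fun i => ?_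
    exact_mod_cast (hf i)
  have hQ : (Matrix.diagonal (fun i => ((Real.sqrt (f i) : ℝ) : ℂ))).PosSemidef := by
    refine posSemidef_diagonal_iff.mpr fun i => ?_
    exact_mod_cast Real.sqrt_nonneg _
  rw [matSqrt, dif_pos hP]
  open scoped MatrixOrder in
  have e : hP.1.eigenvectorUnitary.1 * diagonal ((↑) ∘ (√·) ∘ hP.1.eigenvalues) *
      (star hP.1.eigenvectorUnitary : Matrix m m ℂ) = CFC.sqrt (Matrix.diagonal (fun i => (f i : ℂ))) := by
    rw [CFC.sqrt_eq_real_sqrt _ hP.nonneg, cfcₙ_eq_cfc, hP.1.cfc_eq, IsHermitian.cfc, Unitary.conjStarAlgAut_apply]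
    rfl
  open scoped MatrixOrder in
  rw [e]
  open scoped MatrixOrder in
  refine CFC.sqrt_unique ?_ hQ.nonneg
  rw [diagonal_mul_diagonal]
  have h : ∀ i, ((Real.sqrt (f i) : ℝ) : ℂ) * ((Real.sqrt (f i) : ℝ) : ℂ) = (f i : ℂ) :=
    fun i => by exact_mod_cast Real.mul_self_sqrt (hf i)
  simp only [h]

def dfun (a b : ℝ) : Fin 2 × Fin 2 → ℝ := fun p =>
  if p = (0,0) then a else if p = (1,1) then b else 0

lemma rhoAB_GHZ (a b : ℝ) (ha : 0 ≤ a) (hb : 0 ≤ b) :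
    rhoAB (psiGHZ a b) = Matrix.diagonal (fun p => ((dfun a b p : ℝ) : ℂ)) := by
  ext ⟨i,j⟩ ⟨k,l⟩
  fin_cases i <;> fin_cases j <;> fin_cases k <;> fin_cases l <;>
    simp [rhoAB, psiGHZ, dfun, Fin.sum_univ_two, Matrix.diagonal, Prod.ext_iff,
      ← Complex.ofReal_mul, Real.mul_self_sqrt ha, Real.mul_self_sqrt hb]

lemma spinFlip_diag (a b : ℝ) :
    spinFlip (Matrix.diagonal (fun p => ((dfun a b p : ℝ) : ℂ))) =
      Matrix.diagonal (fun p => ((dfun b a p : ℝ) : ℂ)) := by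
  ext ⟨i,j⟩ ⟨k,l⟩
  fin_cases i <;> fin_cases j <;> fin_cases k <;> fin_cases l <;>
    simp [spinFlip, sigmaY, Matrix.mul_apply, Fintype.sum_prod_type, Fin.sum_univ_two,
      kroneckerMap_apply, Matrix.diagonal, dfun, Prod.ext_iff]

lemma dfun_nonneg {a b : ℝ} (ha : 0 ≤ a) (hb : 0 ≤ b) : ∀ p, 0 ≤ dfun a b p := by
  intro p; unfold dfun; split_ifs <;> simp [ha, hb]


theorem CoA_of_GHZ_state (a b : ℝ) (ha : 0 ≤ a) (hb : 0 ≤ b) (hab : a + b = 1) :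
    CoA (rhoAB (psiGHZ a b)) = 2 * Real.sqrt (a * b) ∧
    2 * Real.sqrt (a * b) = 2 * Real.sqrt (rhoA (psiGHZ a b)).det.re := by
  have h1 := rhoAB_GHZ a b ha hb
  have hs : matSqrt (rhoAB (psiGHZ a b)) =
      Matrix.diagonal (fun p => ((Real.sqrt (dfun a b p) : ℝ) : ℂ)) := by
    rw [h1]; exact matSqrt_diagonal _ (dfun_nonneg ha hb)
  have h2 : spinFlip (rhoAB (psiGHZ a b)) =
      Matrix.diagonal (fun p => ((dfun b a p : ℝ) : ℂ)) := by
    rw [h1]; exact spinFlip_diag a b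
  have keyR : ∀ p, Real.sqrt (dfun a b p) * dfun b a p * Real.sqrt (dfun a b p) =
      dfun (a*b) (a*b) p := by
    rintro ⟨i,j⟩
    fin_cases i <;> fin_cases j <;> simp [dfun, Prod.ext_iff]
    · rw [mul_right_comm, Real.mul_self_sqrt ha]
    · rw [mul_right_comm, Real.mul_self_sqrt hb, mul_comm]
  have key : ∀ p, ((Real.sqrt (dfun a b p) : ℝ) : ℂ) * ((dfun b a p : ℝ) : ℂ) *
      ((Real.sqrt (dfun a b p) : ℝ) : ℂ) = ((dfun (a*b) (a*b) p : ℝ) : ℂ) := by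
    intro p; exact_mod_cast keyR p
  have h3 : matSqrt (rhoAB (psiGHZ a b)) * spinFlip (rhoAB (psiGHZ a b)) *
      matSqrt (rhoAB (psiGHZ a b)) =
      Matrix.diagonal (fun p => ((dfun (a*b) (a*b) p : ℝ) : ℂ)) := by
    rw [hs, h2, diagonal_mul_diagonal, diagonal_mul_diagonal]
    simp only [key]
  have hR : Rmat (rhoAB (psiGHZ a b)) =
      Matrix.diagonal (fun p => ((Real.sqrt (dfun (a*b) (a*b) p) : ℝ) : ℂ)) := by
    rw [Rmat, h3]
    exact matSqrt_diagonal _ (dfun_nonneg (mul_nonneg ha hb) (mul_nonneg ha hb))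
  constructor
  · rw [CoA, hR]
    simp [Matrix.trace, Matrix.diag, Fintype.sum_prod_type, Fin.sum_univ_two, dfun,
      Prod.ext_iff]
    ring
  · have hdet : (rhoA (psiGHZ a b)).det = ((a * b : ℝ) : ℂ) := by
      rw [Matrix.det_fin_two]
      simp [rhoA, psiGHZ, Fin.sum_univ_two, ← Complex.ofReal_mul,
        Real.mul_self_sqrt ha, Real.mul_self_sqrt hb]
    rw [hdet, Complex.ofReal_re]
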